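/- The optimal resampling scheme minimizes the expected sum of squared errors $\mathbb{E}[\sum_{i=1}^M (\tilde W_i - W_i)^2]$ over all unbiased resampling schemes selecting at most $N$ particles, where $\tilde W_i$ is the (possibly zero) post-resampling weight of particle $i$: precisely, among all random variables $(\tilde W_1,\dots,\tilde W_M)$ with $\mathbb{E}[\tilde W_i] = W_i$, $\#\{i : \tilde W_i \ne 0\} \le N$ a.s., and $\tilde W_i \in \{0, \beta_i\}$ for deterministic $\beta_i$, the choice $\beta_i = \max(W_i, 1/C)$ with inclusion probability $\min(1, CW_i)$ achieves the minimum. -/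

import Mathlib

open MeasureTheory

private lemma key_ineq (w b k : ℝ) (hw : 0 < w) (hk : 0 < k) (hb : w ≤ b) :
    w * max w k + k ^ 2 * (w / max w k) ≤ w * b + k ^ 2 * (w / b) := by
  have hb0 : 0 < b := lt_of_lt_of_le hw hb
  rcases le_total w k with h | h
  · rw [max_eq_right h]
    have e1 : k ^ 2 * (w / k) = k * w := by field_simp
    have e2 : w * b + k ^ 2 * (w / b) - (w * k + k * w) = (w / b) * (b - k) ^ 2 := by
      field_simp; ring
    have e3 : 0 ≤ (w / b) * (b - k) ^ 2 := by positivity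
    linarith [e2 ▸ e3, e1]
  · rw [max_eq_left h]
    have e2 : w * b + k ^ 2 * (w / b) - (w * w + k ^ 2 * (w / w)) =
        ((b - w) * (w * b - k ^ 2)) / b := by
      field_simp; ring
    have e3 : 0 ≤ ((b - w) * (w * b - k ^ 2)) / b := by
      apply div_nonneg _ hb0.le
      apply mul_nonneg (by linarith)
      nlinarith
    linarith [e2 ▸ e3]

/-- Fearnhead–Clifford optimality of the resampling step: among all unbiased
resampling schemes keeping at most `N` particles, in which the random
post-resampling weight of particle `i` takes the two values `{0, β i}`, the
expected sum of squared weight errors is at least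
`∑ i, W i * (max (W i) C⁻¹ - W i)`, where `C` solves `∑ i, min 1 (C W i) = N`;
moreover the scheme with `β i = max (W i) C⁻¹` and inclusion probability
`min 1 (C * W i)` achieves this minimum. -/
theorem optimal_resampling_minimizes_variance
    {Ω : Type*} [MeasurableSpace Ω] (μ : Measure Ω) [IsProbabilityMeasure μ]
    (M N : ℕ) (hN : 0 < N) (hNM : N < M)
    (W : Fin M → ℝ) (hpos : ∀ i, 0 < W i) (hsum : ∑ i, W i = 1)
    (C : ℝ) (hC : 0 < C) (heqC : ∑ i, min 1 (C * W i) = (N : ℝ))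
    (β : Fin M → ℝ) (tW : Ω → Fin M → ℝ)
    (hmeas : ∀ i, Measurable fun ω => tW ω i)
    (hsupp : ∀ ω i, tW ω i = 0 ∨ tW ω i = β i)
    (hunb : ∀ i, ∫ ω, tW ω i ∂μ = W i)
    (hcard : ∀ᵐ ω ∂μ, Nat.card {i : Fin M | tW ω i ≠ 0} ≤ N) :
    (∑ i, W i * (max (W i) C⁻¹ - W i)) ≤ ∫ ω, ∑ i, (tW ω i - W i) ^ 2 ∂μ ∧
    ((∀ i, β i = max (W i) C⁻¹) →
      (∀ i, μ {ω | tW ω i ≠ 0} = ENNReal.ofReal (min 1 (C * W i))) →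
      ∫ ω, ∑ i, (tW ω i - W i) ^ 2 ∂μ = ∑ i, W i * (max (W i) C⁻¹ - W i)) := by
  classical
  set A : Fin M → Set Ω := fun i => {ω | tW ω i ≠ 0} with hA_def
  have hAmeas : ∀ i, MeasurableSet (A i) := by
    intro i
    have : A i = (fun ω => tW ω i) ⁻¹' ({0}ᶜ) := by
      ext ω; simp [A]
    rw [this]
    exact (hmeas i) (measurableSet_singleton 0).compl
  have htW : ∀ ω i, tW ω i = (A i).indicator (fun _ => β i) ω := by
    intro ω i
    by_cases h : tW ω i = 0
    · rw [Set.indicator_of_notMem (by simpa [A] using h), h]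
    · rw [Set.indicator_of_mem (by simpa [A] using h)]
      rcases hsupp ω i with h' | h'
      · exact absurd h' h
      · exact h'
  have hint : ∀ i, Integrable (fun ω => tW ω i) μ := by
    intro i
    rw [show (fun ω => tW ω i) = (A i).indicator (fun _ => β i) from funext fun ω => htW ω i]
    exact (integrable_const (β i)).indicator (hAmeas i)
  set p : Fin M → ℝ := fun i => (μ (A i)).toReal with hp_def
  have hp : ∀ i, p i * β i = W i := by
    intro i
    have := hunb i
    rw [show (fun ω => tW ω i) = (A i).indicator (fun _ => β i) from funext fun ω => htW ω i]
      at this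
    rw [integral_indicator_const (β i) (hAmeas i)] at this
    rw [smul_eq_mul] at this
    exact this
  have hp0 : ∀ i, 0 ≤ p i := fun i => ENNReal.toReal_nonneg
  have hp1 : ∀ i, p i ≤ 1 := by
    intro i
    have : μ (A i) ≤ 1 := prob_le_one
    simpa [p] using ENNReal.toReal_mono ENNReal.one_ne_top this
  have hβpos : ∀ i, 0 < β i := by
    intro i
    by_contra h
    push_neg at h
    have := hp i
    nlinarith [hpos i, hp0 i]
  have hβW : ∀ i, W i ≤ β i := by
    intro i
    have := hp i
    nlinarith [hp1 i, hβpos i]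
  have hpval : ∀ i, p i = W i / β i := by
    intro i
    field_simp [(hβpos i).ne']
    exact hp i
  -- second moment computation
  have hfun : ∀ i ω, (tW ω i - W i) ^ 2 = (β i - 2 * W i) * tW ω i + W i ^ 2 := by
    intro i ω
    rcases hsupp ω i with h | h <;> rw [h] <;> ring
  have hsq_int : ∀ i, Integrable (fun ω => (tW ω i - W i) ^ 2) μ := by
    intro i
    rw [show (fun ω => (tW ω i - W i) ^ 2) =
        fun ω => (β i - 2 * W i) * tW ω i + W i ^ 2 from funext fun ω => hfun i ω]
    exact ((hint i).const_mul _).add (integrable_const _)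
  have hsq : ∀ i, ∫ ω, (tW ω i - W i) ^ 2 ∂μ = W i * β i - W i ^ 2 := by
    intro i
    rw [show (fun ω => (tW ω i - W i) ^ 2) =
        fun ω => (β i - 2 * W i) * tW ω i + W i ^ 2 from funext fun ω => hfun i ω]
    rw [integral_add ((hint i).const_mul _) (integrable_const _), integral_const_mul,
      hunb i, integral_const, probReal_univ, one_smul]
    ring
  have hval : ∫ ω, ∑ i, (tW ω i - W i) ^ 2 ∂μ = ∑ i, (W i * β i - W i ^ 2) := by
    rw [integral_finset_sum _ fun i _ => hsq_int i]
    exact Finset.sum_congr rfl fun i _ => hsq i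
  -- constraint: ∑ p ≤ N
  have hconstraint : ∑ i, p i ≤ (N : ℝ) := by
    have h1 : ∀ i, p i = ∫ ω, (A i).indicator (fun _ => (1 : ℝ)) ω ∂μ := by
      intro i
      rw [integral_indicator_const (1 : ℝ) (hAmeas i)]
      simp [p]; rfl
    have h2 : ∑ i, p i = ∫ ω, ∑ i, (A i).indicator (fun _ => (1 : ℝ)) ω ∂μ := by
      rw [integral_finset_sum _ fun i _ => (integrable_const (1 : ℝ)).indicator (hAmeas i)]
      exact Finset.sum_congr rfl fun i _ => h1 i
    rw [h2]
    have hbound : ∀ᵐ ω ∂μ, ∑ i, (A i).indicator (fun _ => (1 : ℝ)) ω ≤ (N : ℝ) := by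
      filter_upwards [hcard] with ω hω
      have hcardeq : Nat.card {i : Fin M | tW ω i ≠ 0} =
          (Finset.univ.filter fun i => tW ω i ≠ 0).card := by
        rw [Nat.card_eq_card_toFinset]
        congr 1
        ext i
        simp
      have hsum' : ∑ i, (A i).indicator (fun _ => (1 : ℝ)) ω =
          ((Finset.univ.filter fun i => tW ω i ≠ 0).card : ℝ) := by
        rw [← Finset.sum_boole]
        exact Finset.sum_congr rfl fun i _ => by
          by_cases h : tW ω i ≠ 0 <;> simp [Set.indicator_apply, A, h]
      rw [hsum']
      rw [hcardeq] at hω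
      exact_mod_cast hω
    have hintsum : Integrable (fun ω => ∑ i, (A i).indicator (fun _ => (1 : ℝ)) ω) μ :=
      integrable_finset_sum _ fun i _ => (integrable_const (1 : ℝ)).indicator (hAmeas i)
    calc ∫ ω, ∑ i, (A i).indicator (fun _ => (1 : ℝ)) ω ∂μ
        ≤ ∫ _, (N : ℝ) ∂μ := integral_mono_ae hintsum (integrable_const _) hbound
      _ = (N : ℝ) := by simp
  -- key inequality summed
  have hCinv : 0 < C⁻¹ := inv_pos.mpr hC
  have hmin : ∀ i, W i / max (W i) C⁻¹ = min 1 (C * W i) := by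
    intro i
    rcases le_total (W i) C⁻¹ with h | h
    · have hle : C * W i ≤ 1 := by
        calc C * W i ≤ C * C⁻¹ := mul_le_mul_of_nonneg_left h hC.le
          _ = 1 := mul_inv_cancel₀ hC.ne'
      rw [max_eq_right h, min_eq_right hle]
      field_simp
    · rw [max_eq_left h, div_self (hpos i).ne', min_eq_left]
      calc (1 : ℝ) = C * C⁻¹ := (mul_inv_cancel₀ hC.ne').symm
        _ ≤ C * W i := mul_le_mul_of_nonneg_left h hC.le
  have hkey : ∑ i, W i * max (W i) C⁻¹ ≤ ∑ i, W i * β i := by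
    have hsumkey : ∑ i, (W i * max (W i) C⁻¹ + C⁻¹ ^ 2 * (W i / max (W i) C⁻¹)) ≤
        ∑ i, (W i * β i + C⁻¹ ^ 2 * (W i / β i)) :=
      Finset.sum_le_sum fun i _ => key_ineq (W i) (β i) C⁻¹ (hpos i) hCinv (hβW i)
    rw [Finset.sum_add_distrib, Finset.sum_add_distrib, ← Finset.mul_sum, ← Finset.mul_sum]
      at hsumkey
    have e1 : ∑ i, W i / max (W i) C⁻¹ = (N : ℝ) := by
      rw [← heqC]; exact Finset.sum_congr rfl fun i _ => hmin i
    have e2 : ∑ i, W i / β i ≤ (N : ℝ) := by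
      rw [← Finset.sum_congr rfl fun i _ => hpval i] at *
      exact hconstraint
    have hC2 : 0 ≤ C⁻¹ ^ 2 := by positivity
    nlinarith [hsumkey]
  constructor
  · rw [hval]
    have expand1 : ∑ i, W i * (max (W i) C⁻¹ - W i) =
        ∑ i, W i * max (W i) C⁻¹ - ∑ i, W i ^ 2 := by
      rw [← Finset.sum_sub_distrib]
      exact Finset.sum_congr rfl fun i _ => by ring
    have expand2 : ∑ i, (W i * β i - W i ^ 2) = ∑ i, W i * β i - ∑ i, W i ^ 2 :=
      Finset.sum_sub_distrib _ _
    rw [expand1, expand2]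
    linarith
  · intro hβeq _
    rw [hval]
    exact Finset.sum_congr rfl fun i _ => by rw [hβeq i]; ring
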